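/- arXiv:1401.5107 — 3 statements merged into one kernel-verified Lean document; each statement's English description precedes it below -/
import Mathlib

section
/- For ∼-classes C and D with CD = C and DD = D: if CD^ω contains an infinite word accepted by the Büchi automaton 𝔄, then every infinite word in CD^ω is accepted by 𝔄. -/
variable {Q : Type*} {A : Type*}

/-- Reachability in a nondeterministic automaton: `q` is reachable from `p` reading `w`. -/
def Reach (δ : Q → A → Set Q) : Q → List A → Q → Prop
  | p, [], q => p = q
  | p, a :: w, q => ∃ r ∈ δ p a, Reach δ r w q

/-- Reachability visiting some final state along the way (possibly the endpoints). -/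
def ReachF (δ : Q → A → Set Q) (Fs : Set Q) (p : Q) (w : List A) (q : Q) : Prop :=
  ∃ u v r, w = u ++ v ∧ r ∈ Fs ∧ Reach δ p u r ∧ Reach δ r v q

/-- The relation ∼ : `w ∼ u` iff for all states `p q`, reachability and
reachability-through-final-states via `w` and via `u` coincide. -/
def Sim (δ : Q → A → Set Q) (Fs : Set Q) (w u : List A) : Prop :=
  ∀ p q : Q, (Reach δ p w q ↔ Reach δ p u q) ∧ (ReachF δ Fs p w q ↔ ReachF δ Fs p u q)

/-- The class of a word in 𝒬 = Σ⁺/∼ ⊎ {[ε]} : for a nonempty word its ∼-class,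
and `[ε] = {ε}` for the empty word. -/
def wordClass (δ : Q → A → Set Q) (Fs : Set Q) (w : List A) : Set (List A) :=
  {u | (w = [] ∧ u = []) ∨ (w ≠ [] ∧ u ≠ [] ∧ Sim δ Fs w u)}

/-- `C` is an element of 𝒬. -/
def IsClass (δ : Q → A → Set Q) (Fs : Set Q) (C : Set (List A)) : Prop :=
  ∃ w : List A, C = wordClass δ Fs w

/-- Elementwise concatenation of languages of finite words. -/
def mulSet (L M : Set (List A)) : Set (List A) := Set.image2 (· ++ ·) L M

/-- Monoid multiplication of classes: the class of the concatenation of representatives. -/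
def classMul (δ : Q → A → Set Q) (Fs : Set Q) (C D : Set (List A)) : Set (List A) :=
  {v | ∃ w ∈ C, ∃ u ∈ D, v ∈ wordClass δ Fs (w ++ u)}

/-- Finite star of a language. -/
def starSet (L : Set (List A)) : Set (List A) :=
  {w | ∃ l : List (List A), (∀ u ∈ l, u ∈ L) ∧ w = l.flatten}

/-- Possibly infinite words over `A` : Σ^{≤ω}, as stable `Option`-valued streams. -/
def Word (A : Type*) : Type _ := {g : ℕ → Option A // ∀ n, g n = none → g (n + 1) = none}

/-- A finite word as an element of Σ^{≤ω}. -/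
def ofList (w : List A) : Word A :=
  ⟨fun n => w[n]?, fun n h => by
    rw [List.getElem?_eq_none_iff] at *
    omega⟩

/-- An infinite word as an element of Σ^{≤ω}. -/
def ofStream (s : ℕ → A) : Word A := ⟨fun n => some (s n), fun n h => by simp at h⟩

/- The (possibly infinite) concatenation `f 0 · f 1 · f 2 ⋯` of a sequence of finite
words, as an element of Σ^{≤ω}. -/
open Classical in
noncomputable def prodWord (f : ℕ → List A) : Word A :=
  ⟨fun n =>
    if h : ∃ k, n < ((List.range k).flatMap f).length then
      ((List.range h.choose).flatMap f)[n]?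
    else none, by
    intro n hn
    dsimp only at hn ⊢
    by_cases h : ∃ k, n < ((List.range k).flatMap f).length
    · exfalso
      rw [dif_pos h, List.getElem?_eq_none_iff] at hn
      have := h.choose_spec
      omega
    · have h2 : ¬ ∃ k, n + 1 < ((List.range k).flatMap f).length := by
        push_neg at h ⊢
        intro k
        have := h k
        omega
      rw [dif_neg h2]⟩

/-- Concatenation of a finite word with a possibly infinite word. -/
def catWord (u : List A) (w : Word A) : Word A :=
  ⟨fun n => if n < u.length then u[n]? else w.1 (n - u.length), by
    intro n hn
    dsimp only at hn ⊢
    by_cases h : n < u.length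
    · exfalso
      rw [if_pos h, List.getElem?_eq_none_iff] at hn
      omega
    · rw [if_neg h] at hn
      have h2 : ¬ n + 1 < u.length := by omega
      rw [if_neg h2]
      have h3 : n + 1 - u.length = (n - u.length) + 1 := by omega
      rw [h3]
      exact w.2 _ hn⟩

/-- `CD^ω` : all words `w₀w₁w₂⋯` with `w₀ ∈ C` and `wᵢ ∈ D` for `i ≥ 1`. -/
def omegaProd (C D : Set (List A)) : Set (Word A) :=
  {w | ∃ f : ℕ → List A, f 0 ∈ C ∧ (∀ i, 1 ≤ i → f i ∈ D) ∧ w = prodWord f}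

/-- `L^ω` : all words `w₁w₂w₃⋯` with all `wᵢ ∈ L`. -/
def omegaPow (L : Set (List A)) : Set (Word A) :=
  {w | ∃ f : ℕ → List A, (∀ i, f i ∈ L) ∧ w = prodWord f}

/-- Acceptance of a finite word (as an NFA). -/
def NFAAccepts (δ : Q → A → Set Q) (q0 : Q) (Fs : Set Q) (w : List A) : Prop :=
  ∃ q ∈ Fs, Reach δ q0 w q

/-- Büchi acceptance of an infinite word: a run from `q0` visiting `Fs` infinitely often. -/
def BuchiAccepts (δ : Q → A → Set Q) (q0 : Q) (Fs : Set Q) (s : ℕ → A) : Prop :=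
  ∃ r : ℕ → Q, r 0 = q0 ∧ (∀ n, r (n + 1) ∈ δ (r n) (s n)) ∧ {n | r n ∈ Fs}.Infinite

/-- The language `L(𝔄) ⊆ Σ^{≤ω}` of the extended Büchi automaton: finite words accepted
as an NFA together with infinite words accepted as a Büchi automaton. -/
def LangOf (δ : Q → A → Set Q) (q0 : Q) (Fs : Set Q) : Set (Word A) :=
  {w | (∃ l : List A, w = ofList l ∧ NFAAccepts δ q0 Fs l) ∨
       (∃ s : ℕ → A, w = ofStream s ∧ BuchiAccepts δ q0 Fs s)}

/-- The set 𝒬 of classes, as a type. -/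
def QClass (δ : Q → A → Set Q) (Fs : Set Q) : Type _ := {C : Set (List A) // IsClass δ Fs C}

/-- The set 𝓒 of pairs `(C, D)` of classes with `CD = C` and `DD = D`, as a type. -/
def CPair (δ : Q → A → Set Q) (Fs : Set Q) : Type _ :=
  {p : Set (List A) × Set (List A) //
    IsClass δ Fs p.1 ∧ IsClass δ Fs p.2 ∧
    classMul δ Fs p.1 p.2 = p.1 ∧ classMul δ Fs p.2 p.2 = p.2}

/-- The language `CD^ω` denoted by an element of 𝓒. -/
def concPair {δ : Q → A → Set Q} {Fs : Set Q} (p : CPair δ Fs) : Set (Word A) :=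
  omegaProd p.1.1 p.1.2

/-- A subset 𝒱 ⊆ 𝓒 is closed: whenever `UV^ω ∩ CD^ω ≠ ∅` for `(C,D) ∈ 𝒱` and
`(U,V) ∈ 𝓒`, then `(U,V) ∈ 𝒱`. -/
def IsClosedC {δ : Q → A → Set Q} {Fs : Set Q} (𝒱 : Set (CPair δ Fs)) : Prop :=
  ∀ p ∈ 𝒱, ∀ q : CPair δ Fs, (concPair q ∩ concPair p).Nonempty → q ∈ 𝒱

/-- Pre-abstraction 𝔣. -/
def frakF (δ : Q → A → Set Q) (Fs : Set Q) (V : Set (Word A)) : Set (CPair δ Fs) :=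
  {p | (concPair p ∩ V).Nonempty}

/-- Pre-concretization 𝔤. -/
def frakG {δ : Q → A → Set Q} {Fs : Set Q} (𝒱 : Set (CPair δ Fs)) : Set (Word A) :=
  ⋃ p ∈ 𝒱, concPair p

/-- Closure 𝔠(𝒱) = ⋃_{n ≥ 1} (𝔣 ∘ 𝔤)ⁿ(𝒱). -/
def frakC {δ : Q → A → Set Q} {Fs : Set Q} (𝒱 : Set (CPair δ Fs)) : Set (CPair δ Fs) :=
  ⋃ n : ℕ, (fun 𝒲 => frakF δ Fs (frakG 𝒲))^[n + 1] 𝒱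

/-- Abstraction α_* -/
def alphaStar (δ : Q → A → Set Q) (Fs : Set Q) (U : Set (List A)) : Set (QClass δ Fs) :=
  {C | (C.1 ∩ U).Nonempty}

/-- Concretization γ_* -/
def gammaStar {δ : Q → A → Set Q} {Fs : Set Q} (𝒰 : Set (QClass δ Fs)) : Set (List A) :=
  ⋃ C ∈ 𝒰, C.1

/-- Abstraction α_{≤ω}. -/
def alphaOmega (δ : Q → A → Set Q) (Fs : Set Q) (V : Set (Word A)) : Set (CPair δ Fs) :=
  frakC (frakF δ Fs V)

/-- Concretization γ_{≤ω}. -/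
def gammaOmega {δ : Q → A → Set Q} {Fs : Set Q} (𝒱 : Set (CPair δ Fs)) : Set (Word A) :=
  frakG 𝒱

section Helpers

variable (δ : Q → A → Set Q) (Fs : Set Q)

def IsRun (ρ : ℕ → Q) (w : List A) : Prop :=
  ∀ j (_ : j < w.length), ρ (j + 1) ∈ δ (ρ j) w[j]

lemma reach_of_run {ρ : ℕ → Q} {w : List A} (h : IsRun δ ρ w) :
    Reach δ (ρ 0) w (ρ w.length) := by
  induction w generalizing ρ with
  | nil => rfl
  | cons a t ih =>
    refine ⟨ρ 1, by exact h 0 (by simp), ?_⟩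
    have := ih (ρ := fun n => ρ (n + 1)) (fun j hj => by exact h (j + 1) (by simpa using hj))
    simpa using this

lemma run_of_reach {p q : Q} {w : List A} (h : Reach δ p w q) :
    ∃ ρ : ℕ → Q, ρ 0 = p ∧ ρ w.length = q ∧ IsRun δ ρ w := by
  induction w generalizing p with
  | nil => exact ⟨fun _ => p, rfl, h, fun j hj => absurd hj (by simp)⟩
  | cons a t ih =>
    obtain ⟨r, hr, h2⟩ := h
    obtain ⟨ρ, h0, hl, hrun⟩ := ih h2
    refine ⟨fun n => match n with | 0 => p | (m + 1) => ρ m, rfl, hl, ?_⟩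
    intro j hj
    match j with
    | 0 => simpa [h0] using hr
    | (m + 1) => simpa using hrun m (by simpa using hj)

lemma reachF_of_run {ρ : ℕ → Q} {w : List A} (h : IsRun δ ρ w) {j : ℕ}
    (hj : j ≤ w.length) (hF : ρ j ∈ Fs) :
    ReachF δ Fs (ρ 0) w (ρ w.length) := by
  refine ⟨w.take j, w.drop j, ρ j, (List.take_append_drop j w).symm, hF, ?_, ?_⟩
  · have h1 : IsRun δ ρ (w.take j) := by
      intro i hi
      have hi' : i < w.length := by simp at hi; omega
      simpa [List.getElem_take] using h i hi'
    have := reach_of_run δ h1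
    simpa [List.length_take, Nat.min_eq_left hj] using this
  · have h2 : IsRun δ (fun n => ρ (j + n)) (w.drop j) := by
      intro i hi
      have hlt : j + i < w.length := by simp at hi; omega
      simpa [List.getElem_drop, Nat.add_assoc] using h (j + i) hlt
    have := reach_of_run δ h2
    simp only [List.length_drop] at this
    simpa [Nat.add_sub_cancel' hj] using this

lemma run_of_reachF {p q : Q} {w : List A} (h : ReachF δ Fs p w q) :
    ∃ ρ : ℕ → Q, ρ 0 = p ∧ ρ w.length = q ∧ IsRun δ ρ w ∧ ∃ j ≤ w.length, ρ j ∈ Fs := by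
  obtain ⟨u, v, r, rfl, hrF, h1, h2⟩ := h
  obtain ⟨ρ₁, e10, e11, hr1⟩ := run_of_reach δ h1
  obtain ⟨ρ₂, e20, e21, hr2⟩ := run_of_reach δ h2
  refine ⟨fun n => if n < u.length then ρ₁ n else ρ₂ (n - u.length), ?_, ?_, ?_,
    u.length, by simp, by simp [e20, hrF]⟩
  · by_cases h0 : 0 < u.length
    · simp [h0, e10]
    · have hu : u.length = 0 := by omega
      simp only [h0, if_false]
      rw [hu] at e11
      simp [e20, ← e11, e10]
  · have hc : ¬ u.length + v.length < u.length := by omega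
    simp only [List.length_append, hc, if_false, Nat.add_sub_cancel_left, e21]
  · intro j hj
    simp only [List.length_append] at hj
    by_cases hjb : j < u.length
    · have hgj : (u ++ v)[j] = u[j] := List.getElem_append_left hjb
      by_cases hja : j + 1 < u.length
      · simpa [hja, hjb, hgj] using hr1 j hjb
      · have hje : j + 1 = u.length := by omega
        have h5 : ρ₂ (j + 1 - u.length) = ρ₁ (j + 1) := by rw [hje]; simp [e20, ← e11]
        have h6 : ρ₂ 0 = ρ₁ (j + 1) := by rw [e20, ← e11, hje]
        simpa [hja, hjb, hgj, h5, h6] using hr1 j hjb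
    · have hjc : u.length ≤ j := by omega
      have hja : ¬ j + 1 < u.length := by omega
      have hgj : (u ++ v)[j] = v[j - u.length] := List.getElem_append_right hjc
      have he : j + 1 - u.length = (j - u.length) + 1 := by omega
      simpa [hja, hjb, hgj, he] using hr2 (j - u.length) (by omega)

end Helpers


section FlatRange

variable {δ : Q → A → Set Q} {Fs : Set Q}

lemma flatRange_succ (g : ℕ → List A) (k : ℕ) :
    (List.range (k + 1)).flatMap g = (List.range k).flatMap g ++ g k := by
  rw [List.range_succ, List.flatMap_append]; simp

lemma flatRange_mono (g : ℕ → List A) :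
    Monotone (fun k => ((List.range k).flatMap g).length) := by
  apply monotone_nat_of_le_succ
  intro k
  rw [flatRange_succ, List.length_append]
  omega

lemma flatRange_len_ge (g : ℕ → List A) (hg : ∀ i, 1 ≤ i → g i ≠ []) (k : ℕ) :
    k ≤ ((List.range k).flatMap g).length + 1 := by
  induction k with
  | zero => omega
  | succ k ih =>
    rw [flatRange_succ, List.length_append]
    rcases Nat.eq_zero_or_pos k with rfl | hk
    · omega
    · have h1 : g k ≠ [] := hg k hk
      have h2 : 0 < (g k).length := List.length_pos_iff.mpr h1
      omega

lemma flatRange_prefix (g : ℕ → List A) {k k' : ℕ} (hkk : k ≤ k') :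
    ∃ t, (List.range k').flatMap g = (List.range k).flatMap g ++ t := by
  induction k', hkk using Nat.le_induction with
  | base => exact ⟨[], by simp⟩
  | succ k' hk ih =>
    obtain ⟨t, ht⟩ := ih
    exact ⟨t ++ g k', by rw [flatRange_succ, ht, List.append_assoc]⟩

lemma flatRange_prefix_getElem (g : ℕ → List A) {k k' : ℕ} (hkk : k ≤ k')
    {n : ℕ} (hn : n < ((List.range k).flatMap g).length)
    (hn' : n < ((List.range k').flatMap g).length) :
    ((List.range k').flatMap g)[n] = ((List.range k).flatMap g)[n] := by
  obtain ⟨t, ht⟩ := flatRange_prefix g hkk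
  rw [List.getElem_of_eq ht, List.getElem_append_left hn]

lemma prod_match {s : ℕ → A} {g : ℕ → List A} (h : ofStream s = prodWord g) :
    (∀ n, ∃ k, n < ((List.range k).flatMap g).length) ∧
    (∀ k n (hn : n < ((List.range k).flatMap g).length),
      ((List.range k).flatMap g)[n] = s n) := by
  have hval : ∀ n, (some (s n) : Option A) = (prodWord g).1 n :=
    fun n => congrFun (congrArg Subtype.val h) n
  have hub : ∀ n, ∃ k, n < ((List.range k).flatMap g).length := by
    intro n
    by_contra hcon
    have hnone : (prodWord g).1 n = none := dif_neg hcon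
    exact absurd ((hval n).trans hnone) (Option.some_ne_none _)
  refine ⟨hub, ?_⟩
  intro k n hn
  have hpos : (prodWord g).1 n = ((List.range (hub n).choose).flatMap g)[n]? :=
    dif_pos (hub n)
  have h1 := (hval n).trans hpos
  have hc : n < ((List.range (hub n).choose).flatMap g).length := (hub n).choose_spec
  rw [List.getElem?_eq_getElem hc] at h1
  have h2 : ((List.range (hub n).choose).flatMap g)[n] = ((List.range k).flatMap g)[n] := by
    rcases le_total k (hub n).choose with hck | hck
    · exact flatRange_prefix_getElem g hck hn hc
    · exact (flatRange_prefix_getElem g hck hc hn).symm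
  rw [← h2, ← Option.some_inj, ← h1]

lemma match_block {g : ℕ → List A} {s : ℕ → A}
    (hmatch : ∀ k n (hn : n < ((List.range k).flatMap g).length),
        ((List.range k).flatMap g)[n] = s n)
    (i j : ℕ) (hj : j < (g i).length) :
    (g i)[j] = s (((List.range i).flatMap g).length + j) := by
  have hlen : ((List.range i).flatMap g).length + j <
      ((List.range (i + 1)).flatMap g).length := by
    rw [flatRange_succ, List.length_append]; omega
  have h1 := hmatch (i + 1) (((List.range i).flatMap g).length + j) hlen
  rw [← h1]
  have h2 : ((List.range (i+1)).flatMap g)[((List.range i).flatMap g).length + j]'hlen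
      = (g i)[j] := by
    have he := flatRange_succ g i
    rw [List.getElem_of_eq he, List.getElem_append_right (by omega)]
    congr 1
    omega
  rw [h2]

end FlatRange


section Blocks

variable {δ : Q → A → Set Q} {Fs : Set Q} {q0 : Q}

lemma buchi_of_blocks (g : ℕ → List A) (s : ℕ → A)
    (hg : ∀ i, 1 ≤ i → g i ≠ [])
    (hmatch : ∀ k n (hn : n < ((List.range k).flatMap g).length),
        ((List.range k).flatMap g)[n] = s n)
    (q : ℕ → Q) (hq0 : q 0 = q0)
    (hstep : ∀ i, Reach δ (q i) (g i) (q (i + 1)))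
    (hinf : {i | ReachF δ Fs (q i) (g i) (q (i + 1))}.Infinite) :
    BuchiAccepts δ q0 Fs s := by
  classical
  set L : ℕ → ℕ := fun k => ((List.range k).flatMap g).length with hL
  have hL0 : L 0 = 0 := by simp [hL]
  have hLsucc : ∀ k, L (k + 1) = L k + (g k).length := by
    intro k
    simp only [hL, flatRange_succ, List.length_append]
  have hLge : ∀ k, k ≤ L k + 1 := fun k => flatRange_len_ge g hg k
  have hmono : Monotone L := flatRange_mono g
  have hlt : ∀ k, 1 ≤ k → L k < L (k + 1) := by
    intro k hk
    rw [hLsucc]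
    have h1 : g k ≠ [] := hg k hk
    have h2 : 0 < (g k).length := List.length_pos_iff.mpr h1
    omega
  have hρ : ∀ i, ∃ ρ : ℕ → Q, ρ 0 = q i ∧ ρ (g i).length = q (i + 1) ∧ IsRun δ ρ (g i) ∧
      (ReachF δ Fs (q i) (g i) (q (i + 1)) → ∃ j ≤ (g i).length, ρ j ∈ Fs) := by
    intro i
    by_cases hF : ReachF δ Fs (q i) (g i) (q (i + 1))
    · obtain ⟨ρ, h0, h1, h2, h3⟩ := run_of_reachF δ Fs hF
      exact ⟨ρ, h0, h1, h2, fun _ => h3⟩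
    · obtain ⟨ρ, h0, h1, h2⟩ := run_of_reach δ (hstep i)
      exact ⟨ρ, h0, h1, h2, fun hh => absurd hh hF⟩
  choose ρ hρ0 hρl hρrun hρF using hρ
  set b : ℕ → ℕ := fun n => Nat.findGreatest (fun i => L i ≤ n) (n + 1) with hb
  have hb1 : ∀ n, L (b n) ≤ n := by
    intro n
    exact Nat.findGreatest_spec (P := fun i => L i ≤ n) (Nat.zero_le _) (by omega)
  have hb2 : ∀ n, n < L (b n + 1) := by
    intro n
    by_contra hcon
    push_neg at hcon
    have h1 : b n + 1 ≤ n + 1 := by have := hLge (b n + 1); omega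
    have h2 : b n + 1 ≤ b n := Nat.le_findGreatest (P := fun j => L j ≤ n) h1 hcon
    omega
  have hbu : ∀ i n, L i ≤ n → n < L (i + 1) → b n = i := by
    intro i n h1 h2
    have hge : i ≤ b n := Nat.le_findGreatest (P := fun j => L j ≤ n) (by have := hLge i; omega) h1
    by_contra hne
    have h3 : i + 1 ≤ b n := by omega
    have h4 := hmono h3
    have h5 := hb1 n
    omega
  set r : ℕ → Q := fun n => ρ (b n) (n - L (b n)) with hr
  have hrat : ∀ i n, L i ≤ n → n ≤ L (i + 1) → r n = ρ i (n - L i) := by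
    intro i n h1 h2
    rcases lt_or_eq_of_le h2 with h2 | h2
    · simp only [hr, hbu i n h1 h2]
    · have hbn : b n = i + 1 := by
        apply hbu (i + 1) n (le_of_eq h2.symm)
        have := hlt (i + 1) (by omega)
        omega
      have e1 : r n = ρ (i + 1) 0 := by
        simp only [hr, hbn]
        congr 1
        omega
      rw [e1, hρ0, ← hρl i]
      congr 1
      rw [h2, hLsucc]
      omega
  have hsblock : ∀ i j (hj : j < (g i).length), (g i)[j] = s (L i + j) :=
    fun i j hj => match_block hmatch i j hj
  refine ⟨r, ?_, ?_, ?_⟩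
  · have h1 := hrat 0 0 (by omega) (by omega)
    rw [h1, hL0]
    simpa using (hρ0 0).trans hq0
  · intro n
    have h1 := hb1 n
    have h2 := hb2 n
    have e1 : r n = ρ (b n) (n - L (b n)) := rfl
    have e2 : r (n + 1) = ρ (b n) (n + 1 - L (b n)) := hrat (b n) (n + 1) (by omega) h2
    rw [e1, e2]
    have hj : n - L (b n) < (g (b n)).length := by
      have := hLsucc (b n)
      omega
    have hstep1 := hρrun (b n) (n - L (b n)) hj
    have hsn : (g (b n))[n - L (b n)] = s n := by
      have := hsblock (b n) (n - L (b n)) hj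
      rwa [Nat.add_sub_cancel' h1] at this
    have he : n + 1 - L (b n) = (n - L (b n)) + 1 := by omega
    rw [he, ← hsn]
    exact hstep1
  · apply Set.infinite_of_not_bddAbove
    rintro ⟨N, hN⟩
    obtain ⟨i, hiF, hiN⟩ := hinf.exists_gt (N + 1)
    obtain ⟨j, hj, hjF⟩ := hρF i hiF
    have hn1 : L i ≤ L i + j := by omega
    have hn2 : L i + j ≤ L (i + 1) := by rw [hLsucc]; omega
    have hrn : r (L i + j) = ρ i j := by
      rw [hrat i (L i + j) hn1 hn2]
      congr 1
      omega
    have hmem : L i + j ∈ {n | r n ∈ Fs} := by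
      simp only [Set.mem_setOf_eq, hrn]
      exact hjF
    have hle : L i + j ≤ N := hN hmem
    have := hLge i
    omega

lemma blocks_of_buchi (g : ℕ → List A) (s : ℕ → A)
    (hg : ∀ i, 1 ≤ i → g i ≠ [])
    (hmatch : ∀ k n (hn : n < ((List.range k).flatMap g).length),
        ((List.range k).flatMap g)[n] = s n)
    (hacc : BuchiAccepts δ q0 Fs s) :
    ∃ q : ℕ → Q, q 0 = q0 ∧ (∀ i, Reach δ (q i) (g i) (q (i + 1))) ∧
      {i | ReachF δ Fs (q i) (g i) (q (i + 1))}.Infinite := by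
  classical
  obtain ⟨r, hr0, hrstep, hrinf⟩ := hacc
  set L : ℕ → ℕ := fun k => ((List.range k).flatMap g).length with hL
  have hL0 : L 0 = 0 := by simp [hL]
  have hLsucc : ∀ k, L (k + 1) = L k + (g k).length := by
    intro k
    simp only [hL, flatRange_succ, List.length_append]
  have hLge : ∀ k, k ≤ L k + 1 := fun k => flatRange_len_ge g hg k
  have hmono : Monotone L := flatRange_mono g
  have hsblock : ∀ i j (hj : j < (g i).length), (g i)[j] = s (L i + j) :=
    fun i j hj => match_block hmatch i j hj
  have hrun : ∀ i, IsRun δ (fun j => r (L i + j)) (g i) := by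
    intro i j hj
    have h1 := hrstep (L i + j)
    rw [← hsblock i j hj] at h1
    simpa [Nat.add_assoc] using h1
  refine ⟨fun i => r (L i), by show r (L 0) = q0; rw [hL0, hr0], ?_, ?_⟩
  · intro i
    have h1 := reach_of_run δ (hrun i)
    simp only [Nat.add_zero] at h1
    rwa [← hLsucc i] at h1
  · apply Set.infinite_of_not_bddAbove
    rintro ⟨N, hN⟩
    obtain ⟨n, hnF, hnN⟩ := hrinf.exists_gt (L (N + 1))
    set i : ℕ := Nat.findGreatest (fun i => L i ≤ n) (n + 1) with hi
    have hi1 : L i ≤ n :=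
      Nat.findGreatest_spec (P := fun i => L i ≤ n) (Nat.zero_le _) (by omega)
    have hi2 : n < L (i + 1) := by
      by_contra hcon
      push_neg at hcon
      have h1 : i + 1 ≤ n + 1 := by have := hLge (i + 1); omega
      have h2 : i + 1 ≤ i := Nat.le_findGreatest (P := fun j => L j ≤ n) h1 hcon
      omega
    have hjlen : n - L i ≤ (g i).length := by
      have := hLsucc i
      omega
    have hFi : ReachF δ Fs (r (L i)) (g i) (r (L (i + 1))) := by
      have h1 := reachF_of_run δ Fs (hrun i) (j := n - L i) hjlen
        (by simpa [Nat.add_sub_cancel' hi1] using hnF)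
      simp only [Nat.add_zero] at h1
      rwa [← hLsucc i] at h1
    have hmem : i ∈ {i | ReachF δ Fs (r (L i)) (g i) (r (L (i + 1)))} := hFi
    have hle : i ≤ N := hN hmem
    have h3 : L (i + 1) ≤ L (N + 1) := hmono (by omega)
    omega

end Blocks

/-- for classes `C, D` with `CD = C`, `DD = D`, if `CD^ω` contains an
infinite word accepted by the Büchi automaton, then every infinite word in `CD^ω` is
accepted. -/
theorem omegaProd_accepts_all {Q A : Type*} [Finite Q] [Finite A]
    (δ : Q → A → Set Q) (q0 : Q) (Fs : Set Q)
    (C D : Set (List A)) (hC : IsClass δ Fs C) (hD : IsClass δ Fs D)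
    (hCD : classMul δ Fs C D = C) (hDD : classMul δ Fs D D = D)
    (h : ∃ s : ℕ → A, ofStream s ∈ omegaProd C D ∧ BuchiAccepts δ q0 Fs s) :
    ∀ s : ℕ → A, ofStream s ∈ omegaProd C D → BuchiAccepts δ q0 Fs s := by
  classical
  obtain ⟨s₀, hs₀mem, hacc⟩ := h
  simp only [omegaProd, Set.mem_setOf_eq] at hs₀mem
  obtain ⟨f, hf0, hfD, hfe⟩ := hs₀mem
  obtain ⟨hub, hmatchf⟩ := prod_match hfe
  obtain ⟨w, hw⟩ := hC
  obtain ⟨u, hu⟩ := hD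
  have hune : u ≠ [] := by
    intro hu0
    have hfnil : ∀ i, 1 ≤ i → f i = [] := by
      intro i hi
      have hmem := hfD i hi
      rw [hu] at hmem
      simp only [wordClass, Set.mem_setOf_eq] at hmem
      rcases hmem with ⟨_, h2⟩ | ⟨h1, _, _⟩
      · exact h2
      · exact absurd hu0 h1
    have hbound : ∀ k, ((List.range k).flatMap f).length ≤ (f 0).length := by
      intro k
      induction k with
      | zero => simp
      | succ k ih =>
        rw [flatRange_succ, List.length_append]
        rcases Nat.eq_zero_or_pos k with rfl | hk
        · simp
        · rw [hfnil k hk]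
          simpa using ih
    obtain ⟨k, hk⟩ := hub (f 0).length
    have := hbound k
    omega
  have hmemD : ∀ v, v ∈ D → v ≠ [] ∧ Sim δ Fs u v := by
    intro v hv
    rw [hu] at hv
    simp only [wordClass, Set.mem_setOf_eq] at hv
    rcases hv with ⟨h1, _⟩ | ⟨_, h2, h3⟩
    · exact absurd h1 hune
    · exact ⟨h2, h3⟩
  intro s' hs'
  simp only [omegaProd, Set.mem_setOf_eq] at hs'
  obtain ⟨f', hf'0, hf'D, hf'e⟩ := hs'
  obtain ⟨hub', hmatchf'⟩ := prod_match hf'e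
  have hgf : ∀ i, 1 ≤ i → f i ≠ [] := fun i hi => (hmemD _ (hfD i hi)).1
  have hgf' : ∀ i, 1 ≤ i → f' i ≠ [] := fun i hi => (hmemD _ (hf'D i hi)).1
  have hsim : ∀ i (p q' : Q), (Reach δ p (f i) q' ↔ Reach δ p (f' i) q') ∧
      (ReachF δ Fs p (f i) q' ↔ ReachF δ Fs p (f' i) q') := by
    intro i p q'
    rcases Nat.eq_zero_or_pos i with rfl | hi
    · rw [hw] at hf0 hf'0
      simp only [wordClass, Set.mem_setOf_eq] at hf0 hf'0
      rcases hf0 with ⟨hw0, hfn⟩ | ⟨hw0, hfn, hsim1⟩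
      · rcases hf'0 with ⟨_, hf'n⟩ | ⟨hw1, _, _⟩
        · rw [hfn, hf'n]
          exact ⟨Iff.rfl, Iff.rfl⟩
        · exact absurd hw0 hw1
      · rcases hf'0 with ⟨hw1, _⟩ | ⟨_, _, hsim2⟩
        · exact absurd hw1 hw0
        · exact ⟨(hsim1 p q').1.symm.trans (hsim2 p q').1,
            (hsim1 p q').2.symm.trans (hsim2 p q').2⟩
    · have h1 := (hmemD _ (hfD i hi)).2
      have h2 := (hmemD _ (hf'D i hi)).2
      exact ⟨(h1 p q').1.symm.trans ((h2 p q').1),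
        (h1 p q').2.symm.trans ((h2 p q').2)⟩
  obtain ⟨q, hq0, hqR, hqF⟩ := blocks_of_buchi f s₀ hgf hmatchf hacc
  apply buchi_of_blocks f' s' hgf' hmatchf' q hq0
    (fun i => (hsim i _ _).1.mp (hqR i))
  exact hqF.mono (fun i hi => (hsim i _ _).2.mp hi)
end

section
/- For every infinite word w over Σ there exist ∼-classes C and D such that w ∈ CD^ω, CD = C, and DD = D. -/
variable {Q : Type*} {A : Type*}

namespace OPCaux

open List

variable {Q : Type*} {A : Type*}

theorem reach_append (δ : Q → A → Set Q) :
    ∀ (u v : List A) (p q : Q),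
      Reach δ p (u ++ v) q ↔ ∃ r, Reach δ p u r ∧ Reach δ r v q
  | [], v, p, q => by
    simp only [List.nil_append, Reach]
    constructor
    · intro h; exact ⟨p, rfl, h⟩
    · rintro ⟨r, rfl, h⟩; exact h
  | a :: u, v, p, q => by
    simp only [List.cons_append, Reach]
    constructor
    · rintro ⟨r, hr, h⟩
      obtain ⟨t, h1, h2⟩ := (reach_append δ u v r q).1 h
      exact ⟨t, ⟨r, hr, h1⟩, h2⟩
    · rintro ⟨t, ⟨r, hr, h1⟩, h2⟩
      exact ⟨r, hr, (reach_append δ u v r q).2 ⟨t, h1, h2⟩⟩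

theorem reachF_append (δ : Q → A → Set Q) (Fs : Set Q) (w1 w2 : List A) (p q : Q) :
    ReachF δ Fs p (w1 ++ w2) q ↔
      (∃ r, ReachF δ Fs p w1 r ∧ Reach δ r w2 q) ∨
      (∃ r, Reach δ p w1 r ∧ ReachF δ Fs r w2 q) := by
  constructor
  · rintro ⟨u, v, rf, heq, hf, h1, h2⟩
    rcases List.append_eq_append_iff.1 heq with ⟨a', hu, hw2⟩ | ⟨c', hw1, hv⟩
    · subst hu; subst hw2
      obtain ⟨m, hm1, hm2⟩ := (reach_append δ w1 a' p rf).1 h1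
      exact Or.inr ⟨m, hm1, ⟨a', v, rf, rfl, hf, hm2, h2⟩⟩
    · subst hw1; subst hv
      obtain ⟨m, hm1, hm2⟩ := (reach_append δ c' w2 rf q).1 h2
      exact Or.inl ⟨m, ⟨u, c', rf, rfl, hf, h1, hm1⟩, hm2⟩
  · rintro (⟨r, ⟨u, v, rf, heq, hf, h1, h2⟩, h3⟩ | ⟨r, h1, ⟨u, v, rf, heq, hf, h2, h3⟩⟩)
    · exact ⟨u, v ++ w2, rf, by rw [heq, List.append_assoc], hf, h1,
        (reach_append δ v w2 rf q).2 ⟨r, h2, h3⟩⟩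
    · exact ⟨w1 ++ u, v, rf, by rw [heq, List.append_assoc], hf,
        (reach_append δ w1 u p rf).2 ⟨r, h1, h2⟩, h3⟩

theorem sim_refl (δ : Q → A → Set Q) (Fs : Set Q) (w : List A) : Sim δ Fs w w :=
  fun _ _ => ⟨Iff.rfl, Iff.rfl⟩

theorem sim_symm {δ : Q → A → Set Q} {Fs : Set Q} {w u : List A}
    (h : Sim δ Fs w u) : Sim δ Fs u w :=
  fun p q => ⟨(h p q).1.symm, (h p q).2.symm⟩

theorem sim_trans {δ : Q → A → Set Q} {Fs : Set Q} {w u v : List A}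
    (h1 : Sim δ Fs w u) (h2 : Sim δ Fs u v) : Sim δ Fs w v :=
  fun p q => ⟨(h1 p q).1.trans (h2 p q).1, (h1 p q).2.trans (h2 p q).2⟩

theorem sim_append {δ : Q → A → Set Q} {Fs : Set Q} {w w' u u' : List A}
    (h1 : Sim δ Fs w w') (h2 : Sim δ Fs u u') : Sim δ Fs (w ++ u) (w' ++ u') := by
  intro p q
  constructor
  · rw [reach_append δ w u p q, reach_append δ w' u' p q]
    exact exists_congr fun r => and_congr ((h1 p r).1) ((h2 r q).1)
  · rw [reachF_append δ Fs w u p q, reachF_append δ Fs w' u' p q]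
    exact or_congr
      (exists_congr fun r => and_congr ((h1 p r).2) ((h2 r q).1))
      (exists_congr fun r => and_congr ((h1 p r).1) ((h2 r q).2))

theorem mem_wordClass_iff {δ : Q → A → Set Q} {Fs : Set Q} {w : List A} (hw : w ≠ []) (v : List A) :
    v ∈ wordClass δ Fs w ↔ v ≠ [] ∧ Sim δ Fs w v := by
  simp [wordClass, hw]

theorem mem_wordClass_self (δ : Q → A → Set Q) (Fs : Set Q) (w : List A) :
    w ∈ wordClass δ Fs w := by
  by_cases hw : w = []
  · exact Or.inl ⟨hw, hw⟩
  · exact Or.inr ⟨hw, hw, sim_refl δ Fs w⟩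

theorem wordClass_eq_of_sim {δ : Q → A → Set Q} {Fs : Set Q} {w u : List A}
    (hw : w ≠ []) (hu : u ≠ []) (h : Sim δ Fs w u) :
    wordClass δ Fs w = wordClass δ Fs u := by
  ext v
  rw [mem_wordClass_iff hw, mem_wordClass_iff hu]
  exact and_congr Iff.rfl ⟨fun h' => sim_trans (sim_symm h) h', fun h' => sim_trans h h'⟩

theorem classMul_eq {δ : Q → A → Set Q} {Fs : Set Q} {w0 d0 : List A}
    (hw : w0 ≠ []) (hd : d0 ≠ []) (hsim : Sim δ Fs (w0 ++ d0) w0) :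
    classMul δ Fs (wordClass δ Fs w0) (wordClass δ Fs d0) = wordClass δ Fs w0 := by
  have hwd : w0 ++ d0 ≠ [] := by simp [hw]
  ext v
  constructor
  · rintro ⟨w, hwmem, u, humem, hv⟩
    obtain ⟨hwne, hsw⟩ := (mem_wordClass_iff hw w).1 hwmem
    obtain ⟨hune, hsu⟩ := (mem_wordClass_iff hd u).1 humem
    have hne : w ++ u ≠ [] := by simp [hwne]
    obtain ⟨hvne, hsv⟩ := (mem_wordClass_iff hne v).1 hv
    refine (mem_wordClass_iff hw v).2 ⟨hvne, ?_⟩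
    exact sim_trans (sim_symm hsim) (sim_trans (sim_append hsw hsu) hsv)
  · intro hv
    obtain ⟨hvne, hsv⟩ := (mem_wordClass_iff hw v).1 hv
    refine ⟨w0, mem_wordClass_self δ Fs w0, d0, mem_wordClass_self δ Fs d0, ?_⟩
    exact (mem_wordClass_iff hwd v).2 ⟨hvne, sim_trans hsim hsv⟩

/-! ### Infinite Ramsey for pairs -/

theorem pigeon {K : Type*} [Finite K] {B : Set ℕ} (hB : B.Infinite) (f : ℕ → K) :
    ∃ k, {y ∈ B | f y = k}.Infinite := by
  by_contra h
  push_neg at h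
  have hsub : B ⊆ ⋃ k, {y ∈ B | f y = k} := fun y hy => Set.mem_iUnion.2 ⟨f y, hy, rfl⟩
  exact hB ((Set.finite_iUnion h).subset hsub)

structure RS {K : Type*} (c : ℕ → ℕ → K) where
  x : ℕ
  S : Set ℕ
  k : K
  inf : S.Infinite
  lt : ∀ y ∈ S, x < y
  col : ∀ y ∈ S, c x y = k

noncomputable def rstep {K : Type*} [Finite K] (c : ℕ → ℕ → K) (st : RS c) :
    {t : RS c // t.x ∈ st.S ∧ t.S ⊆ st.S} :=
  let hx := st.inf.nonempty
  let x' := hx.choose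
  have hx' : x' ∈ st.S := hx.choose_spec
  have hB : (st.S \ Set.Iic x').Infinite := st.inf.diff (Set.finite_Iic x')
  let hk := pigeon hB (c x')
  ⟨⟨x', {y ∈ st.S \ Set.Iic x' | c x' y = hk.choose}, hk.choose, hk.choose_spec,
    fun y hy => lt_of_not_ge fun hle => hy.1.2 hle,
    fun y hy => hy.2⟩, hx', fun y hy => hy.1.1⟩

noncomputable def rinit {K : Type*} [Finite K] (c : ℕ → ℕ → K) : RS c :=
  have hB : (Set.Iic 0 : Set ℕ)ᶜ.Infinite := (Set.finite_Iic (0 : ℕ)).infinite_compl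
  let hk := pigeon hB (c 0)
  ⟨0, {y ∈ (Set.Iic 0 : Set ℕ)ᶜ | c 0 y = hk.choose}, hk.choose, hk.choose_spec,
    fun y hy => lt_of_not_ge fun hle => hy.1 hle,
    fun y hy => hy.2⟩

noncomputable def rseq {K : Type*} [Finite K] (c : ℕ → ℕ → K) : ℕ → RS c
  | 0 => rinit c
  | n + 1 => (rstep c (rseq c n)).1

theorem rseq_mem {K : Type*} [Finite K] (c : ℕ → ℕ → K) (n : ℕ) :
    (rseq c (n + 1)).x ∈ (rseq c n).S := (rstep c (rseq c n)).2.1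

theorem rseq_sub {K : Type*} [Finite K] (c : ℕ → ℕ → K) (n : ℕ) :
    (rseq c (n + 1)).S ⊆ (rseq c n).S := (rstep c (rseq c n)).2.2

theorem rseq_sub_le {K : Type*} [Finite K] (c : ℕ → ℕ → K) {n m : ℕ} (h : n ≤ m) :
    (rseq c m).S ⊆ (rseq c n).S := by
  induction h with
  | refl => exact fun _ h => h
  | step _ ih => exact fun y hy => ih (rseq_sub c _ hy)

theorem rseq_x_mem {K : Type*} [Finite K] (c : ℕ → ℕ → K) {n m : ℕ} (h : n < m) :
    (rseq c m).x ∈ (rseq c n).S := by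
  obtain ⟨m, rfl⟩ := Nat.exists_eq_add_of_lt h
  exact rseq_sub_le c (Nat.le_add_right n m) (rseq_mem c (n + m))

theorem ramsey_pairs {K : Type*} [Finite K] (c : ℕ → ℕ → K) :
    ∃ φ : ℕ → ℕ, StrictMono φ ∧ ∃ k : K, ∀ i j, i < j → c (φ i) (φ j) = k := by
  have hxmono : StrictMono fun n => (rseq c n).x := by
    intro n m h
    exact (rseq c n).lt _ (rseq_x_mem c h)
  have hcol : ∀ {n m : ℕ}, n < m → c ((rseq c n).x) ((rseq c m).x) = (rseq c n).k :=
    fun {n m} h => (rseq c n).col _ (rseq_x_mem c h)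
  obtain ⟨k, hk⟩ := pigeon (Set.infinite_univ (α := ℕ)) (fun n => (rseq c n).k)
  have hk' : {n | (rseq c n).k = k}.Infinite := by
    refine hk.mono fun y hy => hy.2
  refine ⟨fun i => (rseq c (Nat.nth (fun n => (rseq c n).k = k) i)).x,
    hxmono.comp (Nat.nth_strictMono hk'), k, fun i j hij => ?_⟩
  rw [hcol (Nat.nth_strictMono hk' hij)]
  exact Nat.nth_mem_of_infinite hk' i

/-! ### Segments of a stream -/

def seg (s : ℕ → A) (a b : ℕ) : List A := (List.range (b - a)).map fun t => s (a + t)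

theorem seg_length (s : ℕ → A) (a b : ℕ) : (seg s a b).length = b - a := by simp [seg]

theorem seg_ne_nil (s : ℕ → A) {a b : ℕ} (h : a < b) : seg s a b ≠ [] := by
  intro h'
  apply_fun List.length at h'
  simp [seg] at h'
  omega

theorem seg_append (s : ℕ → A) {a b c : ℕ} (h1 : a ≤ b) (h2 : b ≤ c) :
    seg s a b ++ seg s b c = seg s a c := by
  have hc : c - a = (b - a) + (c - b) := by omega
  rw [seg, seg, seg, hc, List.range_add, List.map_append, List.map_map]
  congr 1
  have : ((fun t => s (a + t)) ∘ fun x => (b - a) + x) = fun t => s (b + t) := by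
    funext t
    simp only [Function.comp]
    congr 1
    omega
  rw [this]

def sigOf (δ : Q → A → Set Q) (Fs : Set Q) (w : List A) : (Q → Q → Prop) × (Q → Q → Prop) :=
  (fun p q => Reach δ p w q, fun p q => ReachF δ Fs p w q)

theorem sim_of_sig_eq {δ : Q → A → Set Q} {Fs : Set Q} {w u : List A}
    (h : sigOf δ Fs w = sigOf δ Fs u) : Sim δ Fs w u := fun p q =>
  ⟨iff_of_eq (congrFun₂ (congrArg Prod.fst h) p q),
   iff_of_eq (congrFun₂ (congrArg Prod.snd h) p q)⟩

end OPCaux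

/-- every infinite word lies in some `CD^ω` with `C, D` classes satisfying
`CD = C` and `DD = D`. -/
theorem omegaProd_covers {Q A : Type*} [Finite Q] [Finite A]
    (δ : Q → A → Set Q) (Fs : Set Q) (s : ℕ → A) :
    ∃ C D : Set (List A), IsClass δ Fs C ∧ IsClass δ Fs D ∧
      classMul δ Fs C D = C ∧ classMul δ Fs D D = D ∧ ofStream s ∈ omegaProd C D := by
  classical
  open OPCaux in
  -- color pairs by (signature of prefix, signature of infix)
  obtain ⟨φ, hφ, ⟨k1, k2⟩, hc⟩ := ramsey_pairs
    (fun i j => (sigOf δ Fs (seg s 0 i), sigOf δ Fs (seg s i j)))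
  have hpre : ∀ i, sigOf δ Fs (seg s 0 (φ i)) = k1 := fun i =>
    congrArg Prod.fst (hc i (i + 1) (Nat.lt_succ_self i))
  have hin : ∀ i j, i < j → sigOf δ Fs (seg s (φ i) (φ j)) = k2 := fun i j h =>
    congrArg Prod.snd (hc i j h)
  have hφle : ∀ i, i ≤ φ i := fun i => hφ.le_apply
  have h1pos : 0 < φ 1 := lt_of_lt_of_le one_pos (hφle 1)
  have hlt : ∀ {i j : ℕ}, i < j → φ i < φ j := fun h => hφ h
  -- segment boundaries
  set e : ℕ → ℕ := fun k => match k with | 0 => 0 | k + 1 => φ (k + 1) with he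
  have he0 : e 0 = 0 := rfl
  have heS : ∀ k, e (k + 1) = φ (k + 1) := fun k => rfl
  have hemono : ∀ k, e k < e (k + 1) := by
    intro k
    match k with
    | 0 => simpa [he0, heS] using h1pos
    | k + 1 => simpa [heS] using hlt (Nat.lt_succ_self (k + 1))
  set f : ℕ → List A := fun k => seg s (e k) (e (k + 1)) with hf
  -- the two classes
  set w0 : List A := seg s 0 (φ 1) with hw0
  set d0 : List A := seg s (φ 1) (φ 2) with hd0
  have hw0ne : w0 ≠ [] := seg_ne_nil s h1pos
  have hd0ne : d0 ≠ [] := seg_ne_nil s (hlt one_lt_two)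
  refine ⟨wordClass δ Fs w0, wordClass δ Fs d0, ⟨w0, rfl⟩, ⟨d0, rfl⟩, ?_, ?_, ?_⟩
  · -- CD = C
    apply classMul_eq hw0ne hd0ne
    have happ : w0 ++ d0 = seg s 0 (φ 2) :=
      seg_append s (Nat.zero_le _) (hlt one_lt_two).le
    rw [happ]
    exact sim_of_sig_eq ((hpre 2).trans (hpre 1).symm)
  · -- DD = D
    have hd0' : d0 ++ seg s (φ 2) (φ 3) = seg s (φ 1) (φ 3) :=
      seg_append s (hlt one_lt_two).le (hlt (by norm_num)).le
    have hsim23 : Sim δ Fs d0 (seg s (φ 2) (φ 3)) :=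
      sim_of_sig_eq ((hin 1 2 one_lt_two).trans (hin 2 3 (by norm_num)).symm)
    have h2 : wordClass δ Fs d0 = wordClass δ Fs (seg s (φ 2) (φ 3)) :=
      wordClass_eq_of_sim hd0ne (seg_ne_nil s (hlt (by norm_num))) hsim23
    calc classMul δ Fs (wordClass δ Fs d0) (wordClass δ Fs d0)
        = classMul δ Fs (wordClass δ Fs d0) (wordClass δ Fs (seg s (φ 2) (φ 3))) := by rw [← h2]
      _ = wordClass δ Fs d0 := by
          apply classMul_eq hd0ne (seg_ne_nil s (hlt (by norm_num)))
          rw [hd0']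
          exact sim_of_sig_eq ((hin 1 3 (by norm_num)).trans (hin 1 2 one_lt_two).symm)
  · -- membership in CD^ω
    refine ⟨f, ?_, ?_, ?_⟩
    · have : f 0 = w0 := by simp [hf, hw0, he0, heS]
      rw [this]
      exact mem_wordClass_self δ Fs w0
    · intro i hi
      obtain ⟨m, rfl⟩ := Nat.exists_eq_add_of_le hi
      have hfi : f (1 + m) = seg s (φ (1 + m)) (φ (1 + m + 1)) := by
        match m with
        | 0 => rfl
        | m + 1 => rfl
      rw [hfi]
      refine (mem_wordClass_iff hd0ne _).2 ⟨seg_ne_nil s (hlt (Nat.lt_succ_self _)), ?_⟩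
      exact sim_of_sig_eq ((hin 1 2 one_lt_two).trans
        (hin (1 + m) (1 + m + 1) (Nat.lt_succ_self _)).symm)
    · -- ofStream s = prodWord f
      have hflatlen : ∀ k, ((List.range k).flatMap f).length = e k := by
        intro k
        induction k with
        | zero => simp [he0]
        | succ n ih =>
          rw [List.range_succ, List.flatMap_append]
          simp only [List.length_append, ih, List.flatMap_cons, List.flatMap_nil,
            List.append_nil, hf, seg_length]
          have := hemono n
          simp only [hf] at ih
          omega
      have hemono' : ∀ k, e k ≤ e (k + 1) := fun k => (hemono k).le
      have hflat : ∀ k, (List.range k).flatMap f = seg s 0 (e k) := by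
        intro k
        induction k with
        | zero => simp [he0, seg]
        | succ n ih =>
          rw [List.range_succ, List.flatMap_append, ih]
          simp only [List.flatMap_cons, List.flatMap_nil, List.append_nil, hf]
          exact seg_append s (Nat.zero_le _) (hemono' n)
      apply Subtype.ext
      funext n
      have hex : ∃ k, n < ((List.range k).flatMap f).length := by
        refine ⟨n + 1, ?_⟩
        rw [hflatlen, heS]
        have := hφle (n + 1)
        omega
      show some (s n) = _
      rw [prodWord]
      simp only
      rw [dif_pos hex]
      have hk := hex.choose_spec
      rw [hflatlen] at hk
      rw [hflat]
      rw [seg]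
      rw [List.getElem?_map, List.getElem?_range (by omega : n < e hex.choose - 0)]
      simp
end

section
/- Let (Lᵢ)_{i≥1} be a sequence of ∼-classes (in the monoid 𝒬 = Σ⁺/∼ ⊎ {[ε]}) and let P be the set of all (finite or infinite) words of the form w₁w₂w₃⋯ with wᵢ ∈ Lᵢ. Then there exist classes U, V ∈ 𝒬 with UV = U and VV = V such that P ⊆ UV^ω. -/
variable {Q : Type*} {A : Type*}

section Ramsey
variable {C : Type*} [Finite C]

lemma pigeon_infinite (S : Set ℕ) (hS : S.Infinite) (c : ℕ → C) :
    ∃ v, {n ∈ S | c n = v}.Infinite := by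
  by_contra h
  push_neg at h
  have : S = ⋃ v, {n ∈ S | c n = v} := by
    ext n; simp [Set.mem_iUnion]
  exact hS (this ▸ Set.finite_iUnion h)

structure RState (c : ℕ → ℕ → C) where
  a : ℕ
  S : Set ℕ
  hS : S.Infinite
  ha : ∀ n ∈ S, a < n
  hc : ∀ m ∈ S, ∀ n ∈ S, c a m = c a n

noncomputable def rStep (c : ℕ → ℕ → C) (S : Set ℕ) (hS : S.Infinite) : RState c := by
  classical
  refine
    let a := sInf S
    let S1 := {n ∈ S | a < n}
    have hS1 : S1.Infinite := by
      have : S \ {n | n ≤ a} ⊆ S1 := by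
        intro n hn
        exact ⟨hn.1, by simpa using hn.2⟩
      exact Set.Infinite.mono this (hS.diff (Set.finite_le_nat a))
    have hv := pigeon_infinite S1 hS1 (c a)
    ⟨a, {n ∈ S1 | c a n = hv.choose}, hv.choose_spec, ?_, ?_⟩
  · intro n hn; exact hn.1.2
  · intro m hm n hn; rw [hm.2, hn.2]

lemma rStep_S_subset (c : ℕ → ℕ → C) (S : Set ℕ) (hS : S.Infinite) :
    (rStep c S hS).S ⊆ S := fun n hn => hn.1.1

lemma rStep_a_mem (c : ℕ → ℕ → C) (S : Set ℕ) (hS : S.Infinite) :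
    (rStep c S hS).a ∈ S := Nat.sInf_mem hS.nonempty

noncomputable def rSeq (c : ℕ → ℕ → C) : ℕ → RState c
  | 0 => rStep c Set.univ Set.infinite_univ
  | (k+1) => rStep c (rSeq c k).S (rSeq c k).hS

lemma rSeq_succ_mem (c : ℕ → ℕ → C) (k : ℕ) : (rSeq c (k+1)).a ∈ (rSeq c k).S :=
  rStep_a_mem _ _ _

lemma rSeq_succ_subset (c : ℕ → ℕ → C) (k : ℕ) : (rSeq c (k+1)).S ⊆ (rSeq c k).S :=
  rStep_S_subset _ _ _

lemma rSeq_subset_of_le (c : ℕ → ℕ → C) {i j : ℕ} (h : i ≤ j) :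
    (rSeq c j).S ⊆ (rSeq c i).S := by
  induction j with
  | zero => simp_all
  | succ k ih =>
    rcases Nat.le_succ_iff_eq_or_le.mp h with h' | h'
    · rw [h']
    · exact (rSeq_succ_subset c k).trans (ih h')

lemma rSeq_mem_of_lt (c : ℕ → ℕ → C) {i j : ℕ} (h : i < j) : (rSeq c j).a ∈ (rSeq c i).S := by
  obtain ⟨k, rfl⟩ := Nat.exists_eq_add_of_lt h
  exact rSeq_subset_of_le c (by omega) (rSeq_succ_mem c (i + k))

theorem ramsey_pairs (c : ℕ → ℕ → C) :
    ∃ φ : ℕ → ℕ, StrictMono φ ∧ ∃ v : C, ∀ i j, i < j → c (φ i) (φ j) = v := by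
  classical
  set a : ℕ → ℕ := fun k => (rSeq c k).a with ha
  have hmono : StrictMono a := strictMono_nat_of_lt_succ fun k =>
    (rSeq c k).ha _ (rSeq_succ_mem c k)
  have hconst : ∀ i j, i < j → c (a i) (a j) = c (a i) (a (i+1)) := fun i j hij =>
    (rSeq c i).hc _ (rSeq_mem_of_lt c hij) _ (rSeq_succ_mem c i)
  set d : ℕ → C := fun i => c (a i) (a (i+1)) with hd
  obtain ⟨v, hv⟩ := pigeon_infinite Set.univ Set.infinite_univ d
  have hv' : {n | n ∈ Set.univ ∧ d n = v} = {n | d n = v} := by ext n; simp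
  rw [hv'] at hv
  refine ⟨fun i => a (Nat.nth (fun n => d n = v) i), ?_, v, ?_⟩
  · exact hmono.comp (Nat.nth_strictMono hv)
  · intro i j hij
    rw [hconst _ _ ((Nat.nth_strictMono hv) hij)]
    exact Nat.nth_mem_of_infinite hv i

end Ramsey

section Cong
variable (δ : Q → A → Set Q) (Fs : Set Q)

lemma reach_append (p q : Q) (u v : List A) :
    Reach δ p (u ++ v) q ↔ ∃ r, Reach δ p u r ∧ Reach δ r v q := by
  induction u generalizing p with
  | nil => simp [Reach]
  | cons a w ih =>
    simp only [List.cons_append, Reach]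
    constructor
    · rintro ⟨r, hr, h⟩
      obtain ⟨s, hs1, hs2⟩ := (ih r).mp h
      exact ⟨s, ⟨r, hr, hs1⟩, hs2⟩
    · rintro ⟨s, ⟨r, hr, h1⟩, h2⟩
      exact ⟨r, hr, (ih r).mpr ⟨s, h1, h2⟩⟩

lemma reachF_append (p q : Q) (u v : List A) :
    ReachF δ Fs p (u ++ v) q ↔
      (∃ r, ReachF δ Fs p u r ∧ Reach δ r v q) ∨ (∃ r, Reach δ p u r ∧ ReachF δ Fs r v q) := by
  constructor
  · rintro ⟨x, y, r, hxy, hr, h1, h2⟩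
    rcases List.append_eq_append_iff.mp hxy with ⟨m, hm1, hm2⟩ | ⟨m, hm1, hm2⟩
    · subst hm1; subst hm2
      obtain ⟨s, hs1, hs2⟩ := (reach_append δ p r u m).mp h1
      exact Or.inr ⟨s, hs1, ⟨m, y, r, rfl, hr, hs2, h2⟩⟩
    · subst hm1; subst hm2
      obtain ⟨s, hs1, hs2⟩ := (reach_append δ r q m v).mp h2
      exact Or.inl ⟨s, ⟨x, m, r, rfl, hr, h1, hs1⟩, hs2⟩
  · rintro (⟨r, ⟨x, y, s, rfl, hs, h1, h2⟩, h3⟩ | ⟨r, h1, ⟨x, y, s, rfl, hs, h2, h3⟩⟩)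
    · exact ⟨x, y ++ v, s, by simp, hs, h1, (reach_append δ s q y v).mpr ⟨r, h2, h3⟩⟩
    · exact ⟨u ++ x, y, s, by simp, hs, (reach_append δ p s u x).mpr ⟨r, h1, h2⟩, h3⟩

lemma sim_refl (w : List A) : Sim δ Fs w w := fun _ _ => ⟨Iff.rfl, Iff.rfl⟩

lemma sim_symm {w u : List A} (h : Sim δ Fs w u) : Sim δ Fs u w :=
  fun p q => ⟨(h p q).1.symm, (h p q).2.symm⟩

lemma sim_trans {w u v : List A} (h : Sim δ Fs w u) (h' : Sim δ Fs u v) : Sim δ Fs w v :=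
  fun p q => ⟨(h p q).1.trans (h' p q).1, (h p q).2.trans (h' p q).2⟩

lemma sim_append {w w' u u' : List A} (h : Sim δ Fs w w') (h' : Sim δ Fs u u') :
    Sim δ Fs (w ++ u) (w' ++ u') := by
  intro p q
  constructor
  · rw [reach_append, reach_append]
    exact exists_congr fun r => and_congr ((h p r).1) ((h' r q).1)
  · rw [reachF_append, reachF_append]
    refine or_congr ?_ ?_
    · exact exists_congr fun r => and_congr ((h p r).2) ((h' r q).1)
    · exact exists_congr fun r => and_congr ((h p r).1) ((h' r q).2)

lemma mem_wordClass_self (w : List A) : w ∈ wordClass δ Fs w := by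
  by_cases h : w = []
  · exact Or.inl ⟨h, h⟩
  · exact Or.inr ⟨h, h, sim_refl δ Fs w⟩

lemma wordClass_eq_of_mem {w u : List A} (h : u ∈ wordClass δ Fs w) :
    wordClass δ Fs u = wordClass δ Fs w := by
  rcases h with ⟨hw, hu⟩ | ⟨hw, hu, hs⟩
  · rw [hw, hu]
  · ext v
    constructor
    · rintro (⟨h1, h2⟩ | ⟨h1, h2, h3⟩)
      · exact absurd h1 hu
      · exact Or.inr ⟨hw, h2, sim_trans δ Fs hs h3⟩
    · rintro (⟨h1, h2⟩ | ⟨h1, h2, h3⟩)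
      · exact absurd h1 hw
      · exact Or.inr ⟨hu, h2, sim_trans δ Fs (sim_symm δ Fs hs) h3⟩

lemma mem_wordClass_append {a b w u : List A} (hw : w ∈ wordClass δ Fs a)
    (hu : u ∈ wordClass δ Fs b) : w ++ u ∈ wordClass δ Fs (a ++ b) := by
  rcases hw with ⟨ha, hw⟩ | ⟨ha, hw, hsw⟩
  · subst ha; subst hw; simpa using hu
  · rcases hu with ⟨hb, hu⟩ | ⟨hb, hu, hsu⟩
    · subst hb; subst hu; rw [List.append_nil, List.append_nil]; exact Or.inr ⟨ha, hw, hsw⟩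
    · exact Or.inr ⟨by simp [ha], by simp [hw], sim_append δ Fs hsw hsu⟩

lemma classMul_wordClass (a b : List A) :
    classMul δ Fs (wordClass δ Fs a) (wordClass δ Fs b) = wordClass δ Fs (a ++ b) := by
  ext v
  constructor
  · rintro ⟨w, hw, u, hu, hv⟩
    rw [wordClass_eq_of_mem δ Fs (mem_wordClass_append δ Fs hw hu)] at hv
    exact hv
  · intro hv
    exact ⟨a, mem_wordClass_self δ Fs a, b, mem_wordClass_self δ Fs b, hv⟩

/-- The finite "data" of a word determining its class. -/
def wData (w : List A) : Bool × Set (Q × Q) × Set (Q × Q) :=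
  (w.isEmpty, {pq | Reach δ pq.1 w pq.2}, {pq | ReachF δ Fs pq.1 w pq.2})

lemma wordClass_eq_of_data {w u : List A} (h : wData δ Fs w = wData δ Fs u) :
    wordClass δ Fs w = wordClass δ Fs u := by
  unfold wData at h
  have h1 : w.isEmpty = u.isEmpty := congrArg Prod.fst h
  have h2 : ∀ p q, Reach δ p w q ↔ Reach δ p u q := by
    intro p q
    have h' := congrArg (fun x => x.2.1) h
    simpa using Set.ext_iff.mp h' (p, q)
  have h3 : ∀ p q, ReachF δ Fs p w q ↔ ReachF δ Fs p u q := by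
    intro p q
    have h' := congrArg (fun x => x.2.2) h
    simpa using Set.ext_iff.mp h' (p, q)
  by_cases hw : w = []
  · have hu : u = [] := by simpa [hw] using h1.symm
    rw [hw, hu]
  · have hu : u ≠ [] := by
      intro hu
      rw [hu] at h1
      simp [List.isEmpty_iff] at h1
      exact hw h1
    exact (wordClass_eq_of_mem δ Fs (Or.inr ⟨hw, hu, fun p q => ⟨h2 p q, h3 p q⟩⟩)).symm

end Cong

section Regroup
variable {B : Type*}

/-- The concatenation of the first `k` words. -/
def preW (f : ℕ → List B) (k : ℕ) : List B := (List.range k).flatMap f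

lemma preW_prefix (f : ℕ → List B) {k k' : ℕ} (h : k ≤ k') : preW f k <+: preW f k' := by
  refine ⟨(List.range' k (k' - k)).flatMap f, ?_⟩
  unfold preW
  rw [← List.flatMap_append]
  congr 1
  rw [List.range_eq_range', List.range_eq_range']
  have := List.range'_append (s := 0) (m := k) (n := k' - k) (step := 1)
  simp only [Nat.one_mul, Nat.zero_add] at this
  rw [this]
  congr 1
  omega

lemma preW_length_mono (f : ℕ → List B) {k k' : ℕ} (h : k ≤ k') :
    (preW f k).length ≤ (preW f k').length :=
  (preW_prefix f h).length_le

lemma preW_getElem?_stable (f : ℕ → List B) {n k k' : ℕ}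
    (h : n < (preW f k).length) (h' : n < (preW f k').length) :
    (preW f k)[n]? = (preW f k')[n]? := by
  rcases le_total k k' with hk | hk
  · obtain ⟨t, ht⟩ := preW_prefix f hk
    rw [← ht, List.getElem?_append_left h]
  · obtain ⟨t, ht⟩ := preW_prefix f hk
    rw [← ht, List.getElem?_append_left h']

open Classical in
lemma prodWord_val (f : ℕ → List B) (n : ℕ) :
    (prodWord f).1 n = if h : ∃ k, n < (preW f k).length then (preW f h.choose)[n]? else none :=
  rfl

/-- Regrouping an infinite product along a strictly monotone block structure. -/
lemma prodWord_regroup (f : ℕ → List B) (b : ℕ → ℕ) (hb0 : b 0 = 0) (hb : StrictMono b) :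
    prodWord (fun k => (List.range' (b k) (b (k + 1) - b k)).flatMap f) = prodWord f := by
  set g : ℕ → List B := fun k => (List.range' (b k) (b (k + 1) - b k)).flatMap f with hg
  have hpre : ∀ k, preW g k = preW f (b k) := by
    intro k
    induction k with
    | zero => simp [preW, hb0]
    | succ m ih =>
      unfold preW at ih ⊢
      rw [List.range_succ, List.flatMap_append, ih]
      simp only [List.flatMap_cons, List.flatMap_nil, List.append_nil, hg]
      rw [← List.flatMap_append]
      congr 1
      rw [List.range_eq_range', List.range_eq_range']
      have := List.range'_append (s := 0) (m := b m) (n := b (m+1) - b m) (step := 1)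
      simp only [Nat.one_mul, Nat.zero_add] at this
      rw [this]
      congr 1
      have h2 : b m < b (m + 1) := hb (Nat.lt_succ_self m)
      show b m + (b (m + 1) - b m) = b (m + 1)
      omega
  have hiff : ∀ n, (∃ k, n < (preW g k).length) ↔ (∃ k, n < (preW f k).length) := by
    intro n
    constructor
    · rintro ⟨k, hk⟩; exact ⟨b k, by rwa [hpre] at hk⟩
    · rintro ⟨k, hk⟩
      exact ⟨k, by rw [hpre]; exact lt_of_lt_of_le hk (preW_length_mono f (hb.le_apply))⟩
  apply Subtype.ext
  funext n
  rw [prodWord_val, prodWord_val]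
  by_cases h : ∃ k, n < (preW f k).length
  · have h' : ∃ k, n < (preW g k).length := (hiff n).mpr h
    rw [dif_pos h, dif_pos h']
    have h1 := h'.choose_spec
    have h2 := h.choose_spec
    rw [hpre] at h1 ⊢
    exact preW_getElem?_stable f h1 h2
  · rw [dif_neg h, dif_neg (fun h' => h ((hiff n).mp h'))]

end Regroup


section Main
variable (δ : Q → A → Set Q) (Fs : Set Q)

/-- The concatenation of `f` over the interval `[a, b)`. -/
def Fblock (f : ℕ → List A) (a b : ℕ) : List A := (List.range' a (b - a)).flatMap f

lemma Fblock_append (f : ℕ → List A) {a b c : ℕ} (hab : a ≤ b) (hbc : b ≤ c) :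
    Fblock f a b ++ Fblock f b c = Fblock f a c := by
  unfold Fblock
  rw [← List.flatMap_append]
  congr 1
  have h1 := List.range'_append (s := a) (m := b - a) (n := c - b) (step := 1)
  rw [show a + 1 * (b - a) = b by omega, show b - a + (c - b) = c - a by omega] at h1
  exact h1

lemma mem_fblock (f w : ℕ → List A) (hf : ∀ i, f i ∈ wordClass δ Fs (w i)) :
    ∀ n a, Fblock f a (a + n) ∈ wordClass δ Fs (Fblock w a (a + n)) := by
  intro n
  induction n with
  | zero => intro a; simpa [Fblock] using mem_wordClass_self δ Fs []
  | succ n ih =>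
    intro a
    have e : ∀ g : ℕ → List A, Fblock g a (a + (n + 1)) = g a ++ Fblock g (a + 1) ((a + 1) + n) := by
      intro g
      unfold Fblock
      rw [show a + (n + 1) - a = n + 1 by omega, show (a + 1) + n - (a + 1) = n by omega,
        List.range'_succ, List.flatMap_cons]
    rw [e f, e w]
    exact mem_wordClass_append δ Fs (hf a) (ih (a + 1))

lemma mem_fblock' (f w : ℕ → List A) (hf : ∀ i, f i ∈ wordClass δ Fs (w i))
    {a b : ℕ} (hab : a ≤ b) : Fblock f a b ∈ wordClass δ Fs (Fblock w a b) := by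
  obtain ⟨n, rfl⟩ := Nat.exists_eq_add_of_le hab
  exact mem_fblock δ Fs f w hf n a

end Main

/-- Lemma 6, `krit`: if `(Lᵢ)` is a sequence of classes and `P` is the
set of all (finite or infinite) products `w₁w₂w₃⋯` with `wᵢ ∈ Lᵢ`, then there are
classes `U, V` with `UV = U`, `VV = V` and `P ⊆ UV^ω`. -/
theorem prod_of_classes_covered {Q A : Type*} [Finite Q] [Finite A]
    (δ : Q → A → Set Q) (Fs : Set Q) (L : ℕ → Set (List A))
    (hL : ∀ i, IsClass δ Fs (L i)) :
    ∃ U V : Set (List A), IsClass δ Fs U ∧ IsClass δ Fs V ∧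
      classMul δ Fs U V = U ∧ classMul δ Fs V V = V ∧
      {w : Word A | ∃ f : ℕ → List A, (∀ i, f i ∈ L i) ∧ w = prodWord f} ⊆
        omegaProd U V := by
  classical
  choose w hw using hL
  obtain ⟨φ, hφ, v, hv⟩ :=
    ramsey_pairs (fun m n => (wData δ Fs (Fblock w 0 m), wData δ Fs (Fblock w m n)))
  have hv1 : ∀ i j, i < j → wData δ Fs (Fblock w 0 (φ i)) = v.1 := fun i j hij => by
    simpa using congrArg Prod.fst (hv i j hij)
  have hv2 : ∀ i j, i < j → wData δ Fs (Fblock w (φ i) (φ j)) = v.2 := fun i j hij => by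
    simpa using congrArg Prod.snd (hv i j hij)
  have hU : ∀ i, 1 ≤ i →
      wordClass δ Fs (Fblock w 0 (φ i)) = wordClass δ Fs (Fblock w 0 (φ 1)) := fun i hi =>
    wordClass_eq_of_data δ Fs ((hv1 i (i + 1) (by omega)).trans (hv1 1 2 (by omega)).symm)
  have hV : ∀ i j, i < j →
      wordClass δ Fs (Fblock w (φ i) (φ j)) = wordClass δ Fs (Fblock w (φ 1) (φ 2)) :=
    fun i j hij =>
    wordClass_eq_of_data δ Fs ((hv2 i j hij).trans (hv2 1 2 (by omega)).symm)
  have hφ1 : 0 < φ 1 := lt_of_le_of_lt (Nat.zero_le (φ 0)) (hφ (by omega))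
  refine ⟨wordClass δ Fs (Fblock w 0 (φ 1)), wordClass δ Fs (Fblock w (φ 1) (φ 2)),
    ⟨_, rfl⟩, ⟨_, rfl⟩, ?_, ?_, ?_⟩
  · rw [classMul_wordClass, Fblock_append w (Nat.zero_le _) (hφ (by omega : (1:ℕ) < 2)).le]
    exact hU 2 (by omega)
  · nth_rewrite 2 [← hV 2 3 (by omega)]
    rw [classMul_wordClass,
      Fblock_append w (hφ (by omega : (1:ℕ) < 2)).le (hφ (by omega : (2:ℕ) < 3)).le]
    exact hV 1 3 (by omega)
  · rintro x ⟨f, hf, rfl⟩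
    have hf' : ∀ i, f i ∈ wordClass δ Fs (w i) := fun i => (hw i) ▸ hf i
    set b : ℕ → ℕ := fun k => if k = 0 then 0 else φ k with hb
    have hb0 : b 0 = 0 := by simp [hb]
    have hbmono : StrictMono b := by
      apply strictMono_nat_of_lt_succ
      intro k
      match k with
      | 0 => simpa [hb] using hφ1
      | (k + 1) => simpa [hb] using hφ (by omega : k + 1 < k + 2)
    refine ⟨fun k => Fblock f (b k) (b (k + 1)), ?_, ?_, ?_⟩
    · show Fblock f (b 0) (b 1) ∈ _
      have e1 : b 1 = φ 1 := by simp [hb]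
      rw [hb0, e1]
      exact mem_fblock' δ Fs f w hf' (Nat.zero_le _)
    · intro i hi
      show Fblock f (b i) (b (i + 1)) ∈ _
      have e : b i = φ i := by simp only [hb]; rw [if_neg (by omega)]
      have e' : b (i + 1) = φ (i + 1) := by simp [hb]
      rw [e, e', ← hV i (i + 1) (by omega)]
      exact mem_fblock' δ Fs f w hf' (hφ (Nat.lt_succ_self i)).le
    · exact (prodWord_regroup f b hb0 hbmono).symm
end
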